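/- Let P = {p_k : k ≥ 1} be a probability distribution on a countably infinite alphabet whose effective cardinality K = #{k : p_k > 0} is infinite. Then there exists a constant c > 0 and a sequence of positive integers {n_k : k ≥ 1} with n_k → ∞ as k → ∞ such that the tail index satisfies t_{n_k} > c for all sufficiently large k. -/
import Mathlib


open Filter Topology

/-- The tail index `t_n = n * ∑_k p_k (1 - p_k)^n` of a distribution `p` on a
countable alphabet. -/
noncomputable def tailIndex (p : ℕ → ℝ) (n : ℕ) : ℝ :=
  (n : ℝ) * ∑' k, p k * (1 - p k) ^ n

lemma key_est (q : ℝ) (hq0 : 0 < q) (hq2 : q ≤ 1/2) :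
    (1:ℝ)/28 < (⌈1/q⌉₊ : ℝ) * (q * (1 - q) ^ ⌈1/q⌉₊) := by
  set m : ℕ := ⌈1/q⌉₊ with hm
  have hm1 : 1/q ≤ (m : ℝ) := Nat.le_ceil _
  have hm2 : (m : ℝ) < 1/q + 1 := Nat.ceil_lt_add_one (by positivity)
  have hmq1 : 1 ≤ (m : ℝ) * q := (div_le_iff₀ hq0).mp hm1
  have hmq2 : (m : ℝ) * q ≤ 3/2 := by
    have : (m : ℝ) * q < (1/q + 1) * q := mul_lt_mul_of_pos_right hm2 hq0
    rw [add_mul, div_mul_cancel₀ _ (ne_of_gt hq0)] at this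
    linarith
  have hexp : Real.exp (-(2*q)) ≤ 1 - q := by
    rw [Real.exp_neg, inv_le_comm₀ (Real.exp_pos _) (by linarith)]
    calc (1 - q)⁻¹ ≤ 1 + 2*q := by
          rw [inv_le_iff_one_le_mul₀ (by linarith)]
          nlinarith
      _ ≤ Real.exp (2*q) := by linarith [Real.add_one_le_exp (2*q)]
  have hpow : Real.exp (-3) ≤ (1 - q) ^ m := by
    calc Real.exp (-3) ≤ Real.exp ((m:ℝ) * (-(2*q))) := by
          apply Real.exp_le_exp.2; nlinarith
      _ = Real.exp (-(2*q)) ^ m := by rw [← Real.exp_nat_mul]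
      _ ≤ (1 - q) ^ m := pow_le_pow_left₀ (Real.exp_pos _).le hexp m
  have he3 : (1:ℝ)/28 < Real.exp (-3) := by
    have h1 : Real.exp 3 = Real.exp 1 ^ 3 := by
      rw [← Real.exp_nat_mul]; norm_num
    have h2 : Real.exp 3 < 28 := by
      rw [h1]
      calc Real.exp 1 ^ 3 < 2.7182818286 ^ 3 :=
            pow_lt_pow_left₀ Real.exp_one_lt_d9 (Real.exp_pos 1).le (by norm_num)
        _ < 28 := by norm_num
    rw [Real.exp_neg, ← one_div]
    exact one_div_lt_one_div_of_lt (Real.exp_pos 3) h2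
  calc (1:ℝ)/28 < Real.exp (-3) := he3
    _ = 1 * Real.exp (-3) := (one_mul _).symm
    _ ≤ ((m:ℝ) * q) * ((1-q)^m) :=
        mul_le_mul hmq1 hpow (Real.exp_pos _).le (by linarith)
    _ = (m : ℝ) * (q * (1-q)^m) := by ring


/-- If the effective cardinality of a distribution is infinite, there are a constant `c > 0`
and a sequence of positive integers `n_k → ∞` with `t_{n_k} > c` for all large `k`. -/
theorem stmt0 (p : ℕ → ℝ) (hp : ∀ k, 0 ≤ p k) (hsum : ∑' k, p k = 1)
    (hK : {k | 0 < p k}.Infinite) :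
    ∃ c : ℝ, 0 < c ∧ ∃ N : ℕ → ℕ, (∀ k, 0 < N k) ∧ Tendsto N atTop atTop ∧
      ∀ᶠ k in atTop, c < tailIndex p (N k) := by
  have hsummable : Summable p := by
    by_contra h
    rw [tsum_eq_zero_of_not_summable h] at hsum
    norm_num at hsum
  have hple : ∀ k, p k ≤ 1 := by
    intro k
    rw [← hsum]
    exact Summable.le_tsum hsummable k (fun i _ => hp i)
  have hp0 : Tendsto p atTop (𝓝 0) := hsummable.tendsto_atTop_zero
  -- for each j, choose k with 0 < p k < 1/(j+2)
  have hchoose : ∀ j : ℕ, ∃ k, 0 < p k ∧ p k < 1/(j+2) := by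
    intro j
    have hfin : {k | 1/((j:ℝ)+2) ≤ p k}.Finite := by
      have : ∀ᶠ k in atTop, p k < 1/((j:ℝ)+2) :=
        hp0.eventually (Filter.Tendsto.eventually_lt_const (by positivity) tendsto_id)
      rcases eventually_atTop.mp this with ⟨M, hM⟩
      apply Set.Finite.subset (Set.finite_Iio M)
      intro k hk
      by_contra hkM
      exact absurd (hM k (le_of_not_gt hkM)) (not_lt.2 hk)
    obtain ⟨k, hk1, hk2⟩ := (hK.diff hfin).nonempty
    exact ⟨k, hk1, lt_of_not_ge hk2⟩
  choose K hK1 hK2 using hchoose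
  refine ⟨1/28, by norm_num, fun j => ⌈1/(p (K j))⌉₊, ?_, ?_, ?_⟩
  · intro j
    exact Nat.ceil_pos.2 (one_div_pos.2 (hK1 j))
  · apply tendsto_atTop_mono (f := fun j => j + 2)
    · intro j
      have hj2 : (0:ℝ) < (j:ℝ) + 2 := by positivity
      have h := hK2 j
      rw [lt_div_iff₀ hj2] at h
      have h2 : ((j:ℝ)) + 2 ≤ 1 / p (K j) := by
        rw [le_div_iff₀ (hK1 j)]
        nlinarith
      have h3 : ((j + 2 : ℕ) : ℝ) ≤ (⌈1/(p (K j))⌉₊ : ℝ) := by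
        push_cast
        linarith [Nat.le_ceil (1/(p (K j)))]
      exact_mod_cast h3
    · exact tendsto_add_atTop_nat 2
  · apply Filter.Eventually.of_forall
    intro j
    set q := p (K j) with hq
    have hq0 : 0 < q := hK1 j
    have hq2 : q ≤ 1/2 := by
      have := hK2 j
      have h12 : 1/((j:ℝ)+2) ≤ 1/2 := by
        apply one_div_le_one_div_of_le
        · norm_num
        · linarith [Nat.cast_nonneg (α := ℝ) j]
      linarith
    set m := ⌈1/q⌉₊ with hmdef
    have hsum2 : Summable (fun k => p k * (1 - p k) ^ m) := by
      apply Summable.of_nonneg_of_le (fun k => ?_) (fun k => ?_) hsummable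
      · exact mul_nonneg (hp k) (pow_nonneg (by linarith [hple k]) m)
      · calc p k * (1 - p k) ^ m ≤ p k * 1 := by
              apply mul_le_mul_of_nonneg_left _ (hp k)
              exact pow_le_one₀ (by linarith [hple k]) (by linarith [hp k])
          _ = p k := mul_one _
    have hterm : q * (1 - q) ^ m ≤ ∑' k, p k * (1 - p k) ^ m := by
      apply Summable.le_tsum hsum2 (K j)
      intro i _
      exact mul_nonneg (hp i) (pow_nonneg (by linarith [hple i]) m)
    calc (1:ℝ)/28 < (m : ℝ) * (q * (1 - q) ^ m) := key_est q hq0 hq2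
      _ ≤ (m : ℝ) * ∑' k, p k * (1 - p k) ^ m := by
          apply mul_le_mul_of_nonneg_left hterm (Nat.cast_nonneg m)
      _ = tailIndex p m := rfl
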